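/- For k odd and n even, the only tuple (a_1,...,a_k) of nonnegative integers satisfying a_{i-1}+a_i ≤ n cyclically (a_0 = a_k) with a_1+...+a_k = nk/2 is (n/2, n/2, ..., n/2). -/

import Mathlib

/-- Non-attacking rook placement on the linear chained board `B⁻_{n,k}`:
rooks are triples (board, row, column). -/
def LinNonAtt (n k : ℕ) (R : Finset (Fin k × Fin n × Fin n)) : Prop :=
  (∀ r ∈ R, ∀ s ∈ R, r ≠ s → r.1 = s.1 → r.2.1 ≠ s.2.1 ∧ r.2.2 ≠ s.2.2) ∧
  (∀ r ∈ R, ∀ s ∈ R, (r.1 : ℕ) + 1 = (s.1 : ℕ) → r.2.1 ≠ s.2.2)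

/-- Non-attacking rook placement on the circular chained board `B°_{n,k}`. -/
def CircNonAtt (n k : ℕ) (R : Finset (Fin k × Fin n × Fin n)) : Prop :=
  (∀ r ∈ R, ∀ s ∈ R, r ≠ s → r.1 = s.1 → r.2.1 ≠ s.2.1 ∧ r.2.2 ≠ s.2.2) ∧
  (∀ r ∈ R, ∀ s ∈ R, ((r.1 : ℕ) + 1) % k = (s.1 : ℕ) → r.2.1 ≠ s.2.2)

/-- Number of rooks of `R` on board `i`. -/
def bCount {n k : ℕ} (R : Finset (Fin k × Fin n × Fin n)) (i : Fin k) : ℕ :=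
  (R.filter fun r => r.1 = i).card

/-- `a_{i-1}` with the convention `a_0 = 0` (linear case). -/
def prevL {k : ℕ} (a : Fin k → ℕ) (i : Fin k) : ℕ :=
  if i.val = 0 then 0
  else a ⟨i.val - 1, Nat.lt_of_le_of_lt (Nat.sub_le _ _) i.isLt⟩

/-- `a_{i-1}` with cyclic index convention (circular case). -/
def prevC {k : ℕ} (a : Fin k → ℕ) (i : Fin k) : ℕ :=
  a ⟨(i.val + (k - 1)) % k, Nat.mod_lt _ i.pos⟩


/-- For `k` odd and `n` even, the only cyclic composition summing to `nk/2`
is the constant tuple `(n/2, ..., n/2)`. -/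
theorem circular_max_compositions_k_odd_n_even (n k : ℕ) (hn : 0 < n)
    (hne : Even n) (hko : Odd k) (a : Fin k → ℕ) :
    ((∀ i, prevC a i + a i ≤ n) ∧ (∑ i, a i) = n * k / 2) ↔
      ∀ i : Fin k, a i = n / 2 := by
  obtain ⟨m, hm⟩ := hne
  have hk : 0 < k := hko.pos
  haveI : NeZero k := ⟨hk.ne'⟩
  have hnk : n * k / 2 = m * k := by
    rw [hm, show (m + m) * k = 2 * (m * k) by ring]
    exact Nat.mul_div_cancel_left _ two_pos
  have hhalf : n / 2 = m := by omega
  -- the shift by -1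
  have hprev : ∀ i : Fin k, prevC a i = a (i + (-1)) := by
    intro i
    have : (i + (-1) : Fin k) = ⟨(i.val + (k - 1)) % k, Nat.mod_lt _ hk⟩ := by
      apply Fin.ext
      simp [Fin.add_def, Fin.neg_def, Fin.val_one']
      rcases Nat.lt_or_ge 1 k with h2 | h2
      · rw [Nat.mod_eq_of_lt h2]
      · interval_cases k
        simp
    rw [prevC, this]
  constructor
  · rintro ⟨hle, hsum⟩
    -- sum of shifted values equals the sum
    have hshift : ∑ i : Fin k, a (i + (-1)) = ∑ i, a i := by
      exact Fintype.sum_equiv (Equiv.addRight (-1 : Fin k)) _ _ (fun i => rfl)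
    have hle' : ∀ i : Fin k, a (i + (-1)) + a i ≤ n := by
      intro i; rw [← hprev]; exact hle i
    -- every cyclic pair sums to exactly n
    have hall : ∀ i : Fin k, a (i + (-1)) + a i = n := by
      by_contra hcon
      push_neg at hcon
      obtain ⟨j, hj⟩ := hcon
      have hjlt : a (j + (-1)) + a j < n := lt_of_le_of_ne (hle' j) hj
      have hlt : ∑ i : Fin k, (a (i + (-1)) + a i) < ∑ _i : Fin k, n :=
        Finset.sum_lt_sum (fun i _ => hle' i) ⟨j, Finset.mem_univ j, hjlt⟩
      rw [Finset.sum_add_distrib, hshift, hsum, Finset.sum_const,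
        Finset.card_univ, Fintype.card_fin, hnk, smul_eq_mul, hm] at hlt
      nlinarith [hlt]
    have hall' : ∀ i : Fin k, a i + a (i + 1) = n := by
      intro i
      have := hall (i + 1)
      open Fin.NatCast Fin.CommRing in
      rwa [show (i + 1 + (-1) : Fin k) = i by ring] at this
    have g2 : ∀ i : Fin k, a (i + 1 + 1) = a i := by
      intro i
      have h1 := hall' i
      have h2 := hall' (i + 1)
      omega
    open Fin.NatCast Fin.CommRing in
    have hiter : ∀ (mm : ℕ) (i : Fin k), a (i + ((2 * mm : ℕ) : Fin k)) = a i := by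
      intro mm
      induction mm with
      | zero => intro i; simp
      | succ p ih =>
        intro i
        have e : ((2 * (p + 1) : ℕ) : Fin k) = ((2 * p : ℕ) : Fin k) + 1 + 1 := by
          push_cast; ring
        rw [e, show i + (((2 * p : ℕ) : Fin k) + 1 + 1) =
          i + ((2 * p : ℕ) : Fin k) + 1 + 1 by ring, g2, ih]
    open Fin.NatCast Fin.CommRing in
    have hone : ∀ i : Fin k, a (i + 1) = a i := by
      obtain ⟨t, ht⟩ := hko
      intro i
      have e : ((2 * (t + 1) : ℕ) : Fin k) = 1 := by
        rw [show 2 * (t + 1) = k + 1 by omega]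
        push_cast
        simp
      have := hiter (t + 1) i
      rwa [e] at this
    open Fin.NatCast Fin.CommRing in
    have hconst : ∀ i : Fin k, a i = a 0 := by
      have hc2 : ∀ mm : ℕ, a ((mm : ℕ) : Fin k) = a 0 := by
        intro mm
        induction mm with
        | zero => simp
        | succ p ih =>
          push_cast
          rw [hone]
          push_cast at ih
          exact ih
      intro i
      have := hc2 i.val
      rwa [Fin.cast_val_eq_self] at this
    have h0 := hall' 0
    rw [hconst (0 + 1)] at h0
    intro i
    rw [hconst i]
    omega
  · intro h
    constructor
    · intro i
      rw [hprev, h, h]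
      omega
    · simp only [h]
      rw [Finset.sum_const, Finset.card_univ, Fintype.card_fin, hnk, hhalf,
        Nat.mul_comm]
      simp
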